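/- Let d be an even positive integer, A_0 a commutative Noetherian integral domain, r_0,…,r_d elements of A_0, a ≥ 0 an integer, and for each n ≥ 1 let M_n be the n-th multidiagonal matrix with respect to r_0,…,r_d. Let x,y be indeterminates and A = A_0[x,y]/((xy)^a·(r_0x^d + r_1x^{d−1}y + ⋯ + r_dy^d)). If S ⊆ ℕ is a subset such that the union over n ∈ S of the sets of minimal primes of the principal ideals (det M_{n−a−d/2})A_0 is an infinite set, then the union over n ∈ S of the sets of associated primes Ass_A A/(x^n,y^n)A is an infinite set. -/

import Mathlib

set_option synthInstance.maxHeartbeats 1000000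
set_option maxHeartbeats 1000000

open MvPolynomial

/-- The `n`-th multidiagonal matrix with respect to `r 0, …, r d`: the `(i,j)` entry is
`r (d/2 + i − j)` when `0 ≤ d/2 + i − j ≤ d` and `0` otherwise. -/
def multidiag {A₀ : Type} [CommRing A₀] (d : ℕ) (r : ℕ → A₀) (n : ℕ) :
    Matrix (Fin n) (Fin n) A₀ :=
  Matrix.of fun i j =>
    if (j : ℕ) ≤ d / 2 + (i : ℕ) ∧ d / 2 + (i : ℕ) ≤ d + (j : ℕ) then
      r (d / 2 + (i : ℕ) - (j : ℕ))
    else 0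

/-- The polynomial `(xy)^a (r₀ x^d + r₁ x^{d−1} y + ⋯ + r_d y^d)` in `A₀[x,y]`, with `x = X 0`,
`y = X 1`. -/
noncomputable def mdPoly {A₀ : Type} [CommRing A₀] (d a : ℕ) (r : ℕ → A₀) :
    MvPolynomial (Fin 2) A₀ :=
  (X 0 * X 1) ^ a * ∑ i ∈ Finset.range (d + 1), C (r i) * X 0 ^ (d - i) * X 1 ^ i

namespace StmtAux

noncomputable def pe (A B : ℕ) : Fin 2 →₀ ℕ := Finsupp.single 0 A + Finsupp.single 1 B

@[simp] lemma pe_apply0 (A B : ℕ) : pe A B 0 = A := by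
  simp [pe, Finsupp.single_apply]

@[simp] lemma pe_apply1 (A B : ℕ) : pe A B 1 = B := by
  simp [pe, Finsupp.single_apply]

lemma pe_eq_iff {A B C D : ℕ} : pe A B = pe C D ↔ A = C ∧ B = D := by
  constructor
  · intro h
    exact ⟨by simpa using DFunLike.congr_fun h 0, by simpa using DFunLike.congr_fun h 1⟩
  · rintro ⟨rfl, rfl⟩; rfl

lemma pe_le_iff {A B C D : ℕ} : pe A B ≤ pe C D ↔ A ≤ C ∧ B ≤ D := by
  constructor
  · intro h
    exact ⟨by simpa using h 0, by simpa using h 1⟩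
  · intro ⟨h1, h2⟩ x
    fin_cases x <;> simpa

lemma pe_add (A B C D : ℕ) : pe A B + pe C D = pe (A + C) (B + D) := by
  ext x; fin_cases x <;> simp

lemma pe_sub (A B C D : ℕ) : pe A B - pe C D = pe (A - C) (B - D) := by
  ext x; fin_cases x <;> simp [Finsupp.tsub_apply]

lemma single0_eq_pe (A : ℕ) : Finsupp.single (0 : Fin 2) A = pe A 0 := by
  simp [pe]

lemma single1_eq_pe (B : ℕ) : Finsupp.single (1 : Fin 2) B = pe 0 B := by
  simp [pe]

lemma pe_eta (e : Fin 2 →₀ ℕ) : e = pe (e 0) (e 1) := by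
  ext x; fin_cases x <;> simp

variable {A₀ : Type} [CommRing A₀]

/-- exponent of the i-th monomial of mdPoly -/
noncomputable def fexp (a d i : ℕ) : Fin 2 →₀ ℕ := pe (a + (d - i)) (a + i)

/-- exponent of j-th multiplier monomial -/
noncomputable def lexp (m j : ℕ) : Fin 2 →₀ ℕ := pe (m - 1 - j) j

/-- exponent of i-th window monomial -/
noncomputable def eexp (q m i : ℕ) : Fin 2 →₀ ℕ := pe (m + q - 1 - i) (q + i)

noncomputable def uPoly (q m : ℕ) (v : Fin m → A₀) : MvPolynomial (Fin 2) A₀ :=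
  ∑ j : Fin m, monomial (eexp q m j) (v j)

lemma mdPoly_eq (d a : ℕ) (r : ℕ → A₀) :
    mdPoly d a r = ∑ i ∈ Finset.range (d + 1), monomial (fexp a d i) (r i) := by
  unfold mdPoly
  rw [Finset.mul_sum]
  refine Finset.sum_congr rfl fun i _ => ?_
  rw [C_apply, X_pow_eq_monomial, X_pow_eq_monomial, mul_pow, X_pow_eq_monomial,
    X_pow_eq_monomial, monomial_mul, monomial_mul, monomial_mul, monomial_mul]
  rw [single0_eq_pe, single1_eq_pe, single0_eq_pe, single1_eq_pe]
  simp only [zero_add, add_zero, pe_add, one_mul, mul_one]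
  rfl


lemma coeff_uPoly (q m : ℕ) (v : Fin m → A₀) (i : Fin m) :
    coeff (eexp q m i) (uPoly q m v) = v i := by
  unfold uPoly
  rw [coeff_sum]
  rw [Finset.sum_eq_single i]
  · simp [coeff_monomial]
  · intro j _ hji
    rw [coeff_monomial, if_neg]
    unfold eexp
    rw [pe_eq_iff]
    intro ⟨_, h2⟩
    exact hji (Fin.ext (by omega))
  · simp

lemma coeff_lam (m : ℕ) (lam : Fin m → A₀) (j : Fin m) :
    coeff (lexp m j) (∑ j' : Fin m, monomial (lexp m (j' : ℕ)) (lam j')) = lam j := by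
  rw [coeff_sum]
  rw [Finset.sum_eq_single j]
  · simp [coeff_monomial]
  · intro j' _ hji
    rw [coeff_monomial, if_neg]
    unfold lexp
    rw [pe_eq_iff]
    intro ⟨_, h2⟩
    exact hji (Fin.ext (by omega))
  · simp

/-- membership from support shape -/
lemma mem_span_XY_pow (n : ℕ) (g : MvPolynomial (Fin 2) A₀)
    (h : ∀ e ∈ g.support, n ≤ e 0 ∨ n ≤ e 1) :
    g ∈ Ideal.span {(X 0 : MvPolynomial (Fin 2) A₀) ^ n, (X 1) ^ n} := by
  have hrw := support_sum_monomial_coeff g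
  rw [← hrw]
  refine Ideal.sum_mem _ fun e he => ?_
  rcases h e he with h0 | h1
  · have hle : Finsupp.single (0 : Fin 2) n ≤ e := by
      rw [Finsupp.single_le_iff]; exact h0
    have : monomial e (coeff e g) =
        (X 0 : MvPolynomial (Fin 2) A₀) ^ n * monomial (e - Finsupp.single 0 n) (coeff e g) := by
      rw [X_pow_eq_monomial, monomial_mul, one_mul, add_tsub_cancel_of_le hle]
    rw [this, mul_comm]
    exact Ideal.mul_mem_left _ _ (Ideal.subset_span (by simp))
  · have hle : Finsupp.single (1 : Fin 2) n ≤ e := by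
      rw [Finsupp.single_le_iff]; exact h1
    have : monomial e (coeff e g) =
        (X 1 : MvPolynomial (Fin 2) A₀) ^ n * monomial (e - Finsupp.single 1 n) (coeff e g) := by
      rw [X_pow_eq_monomial, monomial_mul, one_mul, add_tsub_cancel_of_le hle]
    rw [this, mul_comm]
    exact Ideal.mul_mem_left _ _ (Ideal.subset_span (by simp))


/-- multiplier polynomial -/
noncomputable def LamPoly (m : ℕ) (lam : Fin m → A₀) : MvPolynomial (Fin 2) A₀ :=
  ∑ j : Fin m, monomial (lexp m (j : ℕ)) (lam j)

lemma coeff_LamPoly (m : ℕ) (lam : Fin m → A₀) (j : Fin m) :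
    coeff (lexp m (j : ℕ)) (LamPoly m lam) = lam j := coeff_lam m lam j

lemma core_sum (d a q m : ℕ) (hq : q = a + d / 2) (hd : d / 2 + d / 2 = d)
    (r : ℕ → A₀) (i' j : Fin m) :
    (∑ i ∈ Finset.range (d + 1),
      if eexp q m (i' : ℕ) = fexp a d i + lexp m (j : ℕ) then r i else 0)
      = multidiag d r m i' j := by
  have hi' : (i' : ℕ) < m := i'.2
  have hj : (j : ℕ) < m := j.2
  have hval : ∀ i : ℕ, (eexp q m (i' : ℕ) = fexp a d i + lexp m (j : ℕ)) ↔
      (m + q - 1 - (i' : ℕ) = a + (d - i) + (m - 1 - (j : ℕ)) ∧ q + (i' : ℕ) = a + i + (j : ℕ)) := by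
    intro i
    unfold eexp fexp lexp
    rw [pe_add, pe_eq_iff]
  show _ = if (j : ℕ) ≤ d / 2 + (i' : ℕ) ∧ d / 2 + (i' : ℕ) ≤ d + (j : ℕ) then
      r (d / 2 + (i' : ℕ) - (j : ℕ)) else 0
  by_cases hc : (j : ℕ) ≤ d / 2 + (i' : ℕ) ∧ d / 2 + (i' : ℕ) ≤ d + (j : ℕ)
  · rw [if_pos hc]
    have hmem : d / 2 + (i' : ℕ) - (j : ℕ) ∈ Finset.range (d + 1) := Finset.mem_range.2 (by omega)
    have h0 : ∀ i ∈ Finset.range (d + 1), i ≠ d / 2 + (i' : ℕ) - (j : ℕ) →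
        (if eexp q m (i' : ℕ) = fexp a d i + lexp m (j : ℕ) then r i else 0) = 0 := by
      intro i hi hne
      have hir := Finset.mem_range.1 hi
      rw [if_neg]
      rw [hval i]
      rintro ⟨h1, h2⟩
      exact hne (by omega)
    rw [Finset.sum_eq_single_of_mem _ hmem h0, if_pos ((hval _).2 ⟨by omega, by omega⟩)]
  · rw [if_neg hc]
    refine Finset.sum_eq_zero fun i hi => ?_
    have hir := Finset.mem_range.1 hi
    rw [if_neg]
    rw [hval i]
    rintro ⟨h1, h2⟩
    exact hc ⟨by omega, by omega⟩

lemma coeff_mul_f (d a : ℕ) (r : ℕ → A₀) (P : MvPolynomial (Fin 2) A₀) (e : Fin 2 →₀ ℕ) :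
    coeff e (P * mdPoly d a r) = ∑ i ∈ Finset.range (d + 1),
      (if fexp a d i ≤ e then coeff (e - fexp a d i) P * r i else 0) := by
  rw [mdPoly_eq, Finset.mul_sum, coeff_sum]
  exact Finset.sum_congr rfl fun i _ => coeff_mul_monomial' _ _ _ _

lemma coeff_eexp_mul (d a q m : ℕ) (hq : q = a + d / 2) (hd : d / 2 + d / 2 = d)
    (r : ℕ → A₀) (P : MvPolynomial (Fin 2) A₀) (i' : Fin m) :
    coeff (eexp q m (i' : ℕ)) (P * mdPoly d a r)
      = ∑ j : Fin m, multidiag d r m i' j * coeff (lexp m (j : ℕ)) P := by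
  rw [coeff_mul_f]
  have hi' : (i' : ℕ) < m := i'.2
  have step : ∀ i ∈ Finset.range (d + 1),
      (if fexp a d i ≤ eexp q m (i' : ℕ) then coeff (eexp q m (i' : ℕ) - fexp a d i) P * r i else 0)
      = ∑ j : Fin m, (if eexp q m (i' : ℕ) = fexp a d i + lexp m (j : ℕ) then r i else 0)
          * coeff (lexp m (j : ℕ)) P := by
    intro i hi
    have hir := Finset.mem_range.1 hi
    by_cases hle : fexp a d i ≤ eexp q m (i' : ℕ)
    · rw [if_pos hle]
      unfold fexp eexp at hle
      rw [pe_le_iff] at hle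
      have hj0 : d / 2 + (i' : ℕ) - i < m := by omega
      have hsub : eexp q m (i' : ℕ) - fexp a d i = lexp m (d / 2 + (i' : ℕ) - i) := by
        unfold eexp fexp lexp; rw [pe_sub, pe_eq_iff]; constructor <;> omega
      rw [Finset.sum_eq_single (⟨d / 2 + (i' : ℕ) - i, hj0⟩ : Fin m)]
      · rw [if_pos]
        · rw [hsub, mul_comm]
        · unfold eexp fexp lexp
          rw [pe_add, pe_eq_iff]
          simp only [Fin.val_mk]
          constructor <;> omega
      · intro j _ hjne
        split_ifs with hEq
        · exfalso
          unfold eexp fexp lexp at hEq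
          rw [pe_add, pe_eq_iff] at hEq
          apply hjne
          apply Fin.ext
          simp only [Fin.val_mk]
          omega
        · exact zero_mul _
      · intro hnm; exact absurd (Finset.mem_univ _) hnm
    · rw [if_neg hle]
      symm
      refine Finset.sum_eq_zero fun j _ => ?_
      split_ifs with hEq
      · exact absurd (hEq ▸ self_le_add_right _ _) hle
      · exact zero_mul _
  rw [Finset.sum_congr rfl step, Finset.sum_comm]
  refine Finset.sum_congr rfl fun j _ => ?_
  rw [← Finset.sum_mul, core_sum d a q m hq hd r i' j]

lemma uPoly_smul (q m : ℕ) (c : A₀) (v : Fin m → A₀) :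
    uPoly q m (c • v) = C c * uPoly q m v := by
  unfold uPoly
  rw [Finset.mul_sum]
  refine Finset.sum_congr rfl fun j _ => ?_
  rw [C_mul_monomial]
  rfl

lemma hard_dir (d a q m : ℕ) (hq : q = a + d / 2) (hd : d / 2 + d / 2 = d) (r : ℕ → A₀)
    (v : Fin m → A₀) (c : A₀)
    (h : C c * uPoly q m v ∈
      Ideal.span {mdPoly d a r, (X 0 : MvPolynomial (Fin 2) A₀) ^ (m + q), (X 1) ^ (m + q)}) :
    ∃ lam : Fin m → A₀, c • v = (multidiag d r m).mulVec lam := by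
  rw [Ideal.mem_span_insert] at h
  obtain ⟨P, z, hz, heq⟩ := h
  rw [Ideal.mem_span_pair] at hz
  obtain ⟨Q, R, hz⟩ := hz
  refine ⟨fun j => coeff (lexp m (j : ℕ)) P, ?_⟩
  funext i'
  have hi' : (i' : ℕ) < m := i'.2
  have hco := congrArg (coeff (eexp q m (i' : ℕ))) heq
  rw [coeff_C_mul, coeff_uPoly, ← hz, coeff_add, coeff_add] at hco
  have h1 : coeff (eexp q m (i' : ℕ)) (Q * (X 0 : MvPolynomial (Fin 2) A₀) ^ (m + q)) = 0 := by
    rw [X_pow_eq_monomial, coeff_mul_monomial', if_neg]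
    rw [single0_eq_pe]
    unfold eexp
    rw [pe_le_iff]
    rintro ⟨hh, -⟩
    omega
  have h2 : coeff (eexp q m (i' : ℕ)) (R * (X 1 : MvPolynomial (Fin 2) A₀) ^ (m + q)) = 0 := by
    rw [X_pow_eq_monomial, coeff_mul_monomial', if_neg]
    rw [single1_eq_pe]
    unfold eexp
    rw [pe_le_iff]
    rintro ⟨-, hh⟩
    omega
  rw [h1, h2, add_zero, add_zero, coeff_eexp_mul d a q m hq hd] at hco
  simp only [Pi.smul_apply, smul_eq_mul, Matrix.mulVec, dotProduct]
  exact hco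

lemma easy_dir (d a q m : ℕ) (hq : q = a + d / 2) (hd : d / 2 + d / 2 = d) (r : ℕ → A₀)
    (lam : Fin m → A₀) :
    uPoly q m ((multidiag d r m).mulVec lam) ∈
      Ideal.span {mdPoly d a r, (X 0 : MvPolynomial (Fin 2) A₀) ^ (m + q), (X 1) ^ (m + q)} := by
  have hg : LamPoly m lam * mdPoly d a r - uPoly q m ((multidiag d r m).mulVec lam) ∈
      Ideal.span {(X 0 : MvPolynomial (Fin 2) A₀) ^ (m + q), (X 1) ^ (m + q)} := by
    apply mem_span_XY_pow
    intro e he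
    by_contra hcon
    push_neg at hcon
    obtain ⟨E0, E1, rfl⟩ : ∃ E0 E1, e = pe E0 E1 := ⟨e 0, e 1, pe_eta e⟩
    obtain ⟨h0, h1⟩ := hcon
    rw [pe_apply0] at h0
    rw [pe_apply1] at h1
    rw [mem_support_iff] at he
    apply he
    rw [coeff_sub]
    by_cases hE : ∃ i' : Fin m, pe E0 E1 = eexp q m (i' : ℕ)
    · obtain ⟨i', hEe⟩ := hE
      rw [hEe, coeff_eexp_mul d a q m hq hd, coeff_uPoly]
      simp only [Matrix.mulVec, dotProduct]
      rw [sub_eq_zero]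
      exact Finset.sum_congr rfl fun j _ => by rw [coeff_LamPoly]
    · have hu : coeff (pe E0 E1) (uPoly q m ((multidiag d r m).mulVec lam)) = 0 := by
        unfold uPoly
        rw [coeff_sum]
        refine Finset.sum_eq_zero fun j _ => ?_
        rw [coeff_monomial, if_neg fun hEq => hE ⟨j, hEq.symm⟩]
      have hf : coeff (pe E0 E1) (LamPoly m lam * mdPoly d a r) = 0 := by
        rw [coeff_mul_f]
        refine Finset.sum_eq_zero fun i hi => ?_
        have hir := Finset.mem_range.1 hi
        split_ifs with hle
        · unfold fexp at hle
          rw [pe_le_iff] at hle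
          have hcoe : coeff (pe E0 E1 - fexp a d i) (LamPoly m lam) = 0 := by
            unfold LamPoly
            rw [coeff_sum]
            refine Finset.sum_eq_zero fun j _ => ?_
            have hj : (j : ℕ) < m := j.2
            rw [coeff_monomial, if_neg]
            unfold lexp fexp
            rw [pe_sub, pe_eq_iff]
            rintro ⟨hh0, hh1⟩
            have him : E1 - q < m := by omega
            refine hE ⟨⟨E1 - q, him⟩, ?_⟩
            unfold eexp
            rw [pe_eq_iff]
            simp only [Fin.val_mk]
            constructor <;> omega
          rw [hcoe, zero_mul]
        · rfl
      rw [hu, hf, sub_zero]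
  have hid : uPoly q m ((multidiag d r m).mulVec lam) =
      LamPoly m lam * mdPoly d a r
        - (LamPoly m lam * mdPoly d a r - uPoly q m ((multidiag d r m).mulVec lam)) := by
    ring
  rw [hid]
  refine Ideal.sub_mem _ (Ideal.mul_mem_left _ _ (Ideal.subset_span (Set.mem_insert _ _))) ?_
  exact Ideal.span_mono (Set.subset_insert _ _) hg





lemma sub_C_mem (g : MvPolynomial (Fin 2) A₀) :
    g - C (constantCoeff g) ∈ Ideal.span {(X 0 : MvPolynomial (Fin 2) A₀), X 1} := by
  induction g using MvPolynomial.induction_on with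
  | C a => simp
  | add p q hp hq =>
      have h : p + q - C (constantCoeff (p + q)) =
          (p - C (constantCoeff p)) + (q - C (constantCoeff q)) := by
        rw [map_add, map_add]; ring
      rw [h]
      exact Ideal.add_mem _ hp hq
  | mul_X p i hp =>
      have h0 : constantCoeff (p * X i) = 0 := by simp
      rw [h0, map_zero, sub_zero]
      have hX : (X i : MvPolynomial (Fin 2) A₀) ∈ Ideal.span {(X 0 : MvPolynomial (Fin 2) A₀), X 1} := by
        fin_cases i
        · exact Ideal.subset_span (by simp)
        · exact Ideal.subset_span (by simp)
      exact Ideal.mul_mem_left _ _ hX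

lemma comap_constantCoeff_eq (p : Ideal A₀) :
    Ideal.comap (constantCoeff : MvPolynomial (Fin 2) A₀ →+* A₀) p
      = p.map (C : A₀ →+* MvPolynomial (Fin 2) A₀) ⊔ Ideal.span {X 0, X 1} := by
  apply le_antisymm
  · intro g hg
    rw [Ideal.mem_comap] at hg
    have hdec : g = C (constantCoeff g) + (g - C (constantCoeff g)) := by ring
    rw [hdec]
    exact Ideal.add_mem _ (Ideal.mem_sup_left (Ideal.mem_map_of_mem _ hg))
      (Ideal.mem_sup_right (sub_C_mem g))
  · rw [sup_le_iff]
    constructor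
    · rw [Ideal.map_le_iff_le_comap]
      intro c hc
      rw [Ideal.mem_comap, Ideal.mem_comap, constantCoeff_C]
      exact hc
    · rw [Ideal.span_le]
      rintro x hx
      simp only [Set.mem_insert_iff, Set.mem_singleton_iff] at hx
      rcases hx with rfl | rfl <;>
        · simp only [SetLike.mem_coe, Ideal.mem_comap, constantCoeff_X]
          exact p.zero_mem

lemma sup_pow_le (I J : Ideal A₀) (α β : ℕ) : (I ⊔ J) ^ (α + β) ≤ I ^ α ⊔ J ^ β := by
  have key : ∀ (n α β : ℕ), α + β = n → (I ⊔ J) ^ n ≤ I ^ α ⊔ J ^ β := by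
    intro n
    induction n with
    | zero =>
        intro α β h
        obtain ⟨rfl, rfl⟩ : α = 0 ∧ β = 0 := by omega
        simp
    | succ n ih =>
        intro α β h
        rcases Nat.eq_zero_or_pos α with rfl | hα
        · have h2 : I ^ 0 ⊔ J ^ β = ⊤ := by simp [Ideal.one_eq_top]
          rw [h2]; exact le_top
        rcases Nat.eq_zero_or_pos β with rfl | hβ
        · have h2 : I ^ α ⊔ J ^ 0 = ⊤ := by
            rw [pow_zero, Ideal.one_eq_top, sup_top_eq]
          rw [h2]; exact le_top
        obtain ⟨α', rfl⟩ : ∃ α', α = α' + 1 := ⟨α - 1, by omega⟩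
        obtain ⟨β', rfl⟩ : ∃ β', β = β' + 1 := ⟨β - 1, by omega⟩
        rw [pow_succ, Submodule.mul_sup]
        apply sup_le
        · calc (I ⊔ J) ^ n * I ≤ (I ^ α' ⊔ J ^ (β' + 1)) * I :=
                Ideal.mul_mono_left (ih α' (β' + 1) (by omega))
            _ = I ^ α' * I ⊔ J ^ (β' + 1) * I := Submodule.sup_mul _ _ _
            _ ≤ I ^ (α' + 1) ⊔ J ^ (β' + 1) := by
                apply sup_le_sup
                · rw [← pow_succ]
                · exact Ideal.mul_le_left.trans le_rfl
        · calc (I ⊔ J) ^ n * J ≤ (I ^ (α' + 1) ⊔ J ^ β') * J :=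
                Ideal.mul_mono_left (ih (α' + 1) β' (by omega))
            _ = I ^ (α' + 1) * J ⊔ J ^ β' * J := Submodule.sup_mul _ _ _
            _ ≤ I ^ (α' + 1) ⊔ J ^ (β' + 1) := by
                apply sup_le_sup
                · exact Ideal.mul_le_left.trans le_rfl
                · rw [← pow_succ]
  exact key _ α β rfl

lemma exists_good_v (m : ℕ) (M : Matrix (Fin m) (Fin m) A₀) (p : Ideal A₀)
    (hp : p.IsPrime) (hD : M.det ∈ p) :
    ∃ v : Fin m → A₀, ∀ c : A₀, (∃ lam, c • v = M.mulVec lam) → c ∈ p := by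
  rcases Nat.eq_zero_or_pos m with rfl | hm
  · exfalso
    have : M.det = 1 := Matrix.det_fin_zero
    rw [this] at hD
    exact hp.ne_top ((Ideal.eq_top_iff_one _).2 hD)
  by_contra hno
  push_neg at hno
  choose cf hcf hcp using hno
  choose lamf hlam using hcf
  set e : Fin m → (Fin m → A₀) := fun i => Pi.single i 1 with he
  set N : Matrix (Fin m) (Fin m) A₀ :=
    Matrix.of (fun x j => (∏ i ∈ Finset.univ.erase j, cf (e i)) * lamf (e j) x) with hN
  have hMN : M * N = (∏ i, cf (e i)) • (1 : Matrix (Fin m) (Fin m) A₀) := by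
    ext x j
    rw [Matrix.mul_apply]
    have hcol : ∀ k, M x k * N k j
        = (∏ i ∈ Finset.univ.erase j, cf (e i)) * (M x k * lamf (e j) k) := by
      intro k
      rw [hN]
      simp only [Matrix.of_apply]
      ring
    rw [Finset.sum_congr rfl fun k _ => hcol k, ← Finset.mul_sum]
    have hmv : (∑ k, M x k * lamf (e j) k) = (M.mulVec (lamf (e j))) x := by
      simp [Matrix.mulVec, dotProduct]
    rw [hmv, ← hlam (e j)]
    simp only [Pi.smul_apply, smul_eq_mul, he]
    rw [Matrix.smul_apply, Matrix.one_apply]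
    by_cases hxj : x = j
    · subst hxj
      rw [if_pos rfl]
      simp only [Pi.single_eq_same, mul_one, smul_eq_mul]
      rw [Finset.prod_erase_mul _ _ (Finset.mem_univ x)]
    · rw [if_neg hxj]
      have hz : (Pi.single j (1 : A₀) : Fin m → A₀) x = 0 := by
        simp [Pi.single_apply, hxj]
      rw [hz, mul_zero, mul_zero]
      simp
  have hdet := congrArg Matrix.det hMN
  rw [Matrix.det_mul, Matrix.det_smul, Matrix.det_one, mul_one, Fintype.card_fin] at hdet
  have hpin : (∏ i, cf (e i)) ^ m ∈ p := by
    rw [← hdet]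
    exact Ideal.mul_mem_right _ _ hD
  have hprod : (∏ i, cf (e i)) ∈ p := hp.pow_mem_iff_mem _ hm |>.1 hpin
  rw [Ideal.IsPrime.prod_mem_iff] at hprod
  obtain ⟨i, -, hi⟩ := hprod
  exact hcp (e i) hi

lemma exists_pow_clear [IsNoetherianRing A₀] (p : Ideal A₀)
    (hp : p.IsPrime) (D : A₀) (hmin : p ∈ (Ideal.span {D}).minimalPrimes) :
    ∃ (k : ℕ) (s : A₀), s ∉ p ∧ ∀ c ∈ p ^ k, s * c ∈ Ideal.span {D} := by
  classical
  haveI := hp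
  let Rp := Localization.AtPrime p
  let φ := algebraMap A₀ Rp
  have hrad : p.map φ ≤ (Ideal.span {φ D}).radical := by
    rw [Ideal.radical_eq_sInf]
    refine le_sInf ?_
    rintro Q ⟨hQD, hQp⟩
    haveI := hQp
    have hcomap_le : Q.comap φ ≤ p := by
      intro x hx
      by_contra hxp
      have hu : IsUnit (φ x) := IsLocalization.map_units Rp (⟨x, hxp⟩ : p.primeCompl)
      exact hQp.ne_top (Ideal.eq_top_of_isUnit_mem _ hx hu)
    have hDin : Ideal.span {D} ≤ Q.comap φ := by
      rw [Ideal.span_le]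
      intro x hx
      simp only [Set.mem_singleton_iff] at hx
      subst hx
      rw [SetLike.mem_coe, Ideal.mem_comap]
      exact hQD (Ideal.subset_span rfl)
    have hple : p ≤ Q.comap φ := hmin.2 ⟨Ideal.IsPrime.comap φ, hDin⟩ hcomap_le
    exact Ideal.map_le_iff_le_comap.2 hple
  have hfg : (p.map φ).FG := by
    haveI : IsNoetherianRing Rp := IsLocalization.isNoetherianRing p.primeCompl Rp inferInstance
    exact IsNoetherian.noetherian _
  obtain ⟨k, hk⟩ := Ideal.exists_pow_le_of_le_radical_of_fg hrad hfg
  obtain ⟨G, hG⟩ : (p ^ k).FG := IsNoetherian.noetherian _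
  have hper : ∀ g : A₀, g ∈ p ^ k → ∃ s : A₀, s ∉ p ∧ s * g ∈ Ideal.span {D} := by
    intro g hg
    have hmem : φ g ∈ Ideal.span {φ D} := by
      apply hk
      rw [← Ideal.map_pow]
      exact Ideal.mem_map_of_mem _ hg
    rw [Ideal.mem_span_singleton'] at hmem
    obtain ⟨z, hz⟩ := hmem
    obtain ⟨⟨b, s⟩, hbs⟩ := IsLocalization.surj p.primeCompl z
    have heq : φ ((s : A₀) * g) = φ (b * D) := by
      rw [map_mul, map_mul, ← hz, ← hbs]
      ring
    obtain ⟨c, hc⟩ := (IsLocalization.eq_iff_exists p.primeCompl Rp).1 heq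
    refine ⟨(c : A₀) * (s : A₀), ?_, ?_⟩
    · exact fun hmem => absurd hmem (Submonoid.mul_mem _ c.2 s.2)
    · rw [Ideal.mem_span_singleton']
      exact ⟨(c : A₀) * b, by linear_combination -hc⟩
  choose! sg hsg1 hsg2 using hper
  refine ⟨k, ∏ g ∈ G, sg g, ?_, ?_⟩
  · intro hmem
    rw [Ideal.IsPrime.prod_mem_iff] at hmem
    obtain ⟨g, hgG, hgp⟩ := hmem
    have hgpk : g ∈ p ^ k := by
      rw [← hG]
      exact Ideal.subset_span hgG
    exact hsg1 g hgpk hgp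
  · intro c hc
    let Itest : Ideal A₀ :=
      Submodule.comap (LinearMap.lsmul A₀ A₀ (∏ g ∈ G, sg g)) (Ideal.span {D})
    have hItest : ∀ x, x ∈ Itest ↔ (∏ g ∈ G, sg g) * x ∈ Ideal.span {D} := by
      intro x
      simp [Itest, Submodule.mem_comap, LinearMap.lsmul_apply, smul_eq_mul]
    have hle : p ^ k ≤ Itest := by
      rw [← hG, Ideal.span_le]
      intro g hgG
      rw [SetLike.mem_coe, hItest]
      have hgpk : g ∈ p ^ k := by rw [← hG]; exact Ideal.subset_span hgG
      have hcal : (∏ g' ∈ G, sg g') * g = (∏ g' ∈ G.erase g, sg g') * (sg g * g) := by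
        rw [← mul_assoc, Finset.prod_erase_mul _ _ hgG]
      rw [hcal]
      exact Ideal.mul_mem_left _ _ (hsg2 g hgpk)
    rw [← hItest]
    exact hle hc



lemma constantCoeff_mdPoly {A₀ : Type} [CommRing A₀] (d a : ℕ) (hd_pos : 0 < d) (r : ℕ → A₀) :
    constantCoeff (mdPoly d a r) = 0 := by
  rw [mdPoly_eq, map_sum]
  refine Finset.sum_eq_zero fun i hi => ?_
  have hir := Finset.mem_range.1 hi
  rw [constantCoeff_monomial, if_neg]
  intro h0
  have h1 := DFunLike.congr_fun h0 0
  have h2 := DFunLike.congr_fun h0 1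
  unfold fexp at h1 h2
  rw [pe_apply0] at h1
  rw [pe_apply1] at h2
  simp only [Finsupp.coe_zero, Pi.zero_apply] at h1 h2
  omega

section Main

variable {A₀ : Type} [CommRing A₀] [IsDomain A₀] [IsNoetherianRing A₀]

theorem main_assoc (d a : ℕ) (hd_pos : 0 < d) (hd2 : d / 2 + d / 2 = d) (r : ℕ → A₀) (n : ℕ)
    (p : Ideal A₀)
    (hp : p ∈ (Ideal.span {(multidiag d r (n - a - d / 2)).det}).minimalPrimes) (hp0 : p ≠ ⊥) :
    IsAssociatedPrime
      (Ideal.map (Ideal.Quotient.mk (Ideal.span {mdPoly d a r}))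
        (Ideal.comap (constantCoeff : MvPolynomial (Fin 2) A₀ →+* A₀) p))
      ((MvPolynomial (Fin 2) A₀ ⧸ Ideal.span {mdPoly d a r}) ⧸
        Ideal.span {Ideal.Quotient.mk (Ideal.span {mdPoly d a r}) (X 0 ^ n),
          Ideal.Quotient.mk (Ideal.span {mdPoly d a r}) (X 1 ^ n)}) := by
  classical
  have hppr : p.IsPrime := hp.1.1
  haveI := hppr
  have hDp : (multidiag d r (n - a - d / 2)).det ∈ p := hp.1.2 (Ideal.subset_span rfl)
  set m := n - a - d / 2 with hmdef
  have hm1 : 1 ≤ m := by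
    by_contra hcon
    have hm0 : m = 0 := by omega
    rw [hm0] at hDp
    rw [Matrix.det_fin_zero] at hDp
    exact hppr.ne_top ((Ideal.eq_top_iff_one _).2 hDp)
  set q := a + d / 2 with hqdef
  have hn : n = m + q := by omega
  set M : Matrix (Fin m) (Fin m) A₀ := multidiag d r m with hM
  set D : A₀ := M.det with hD
  obtain ⟨v, hv⟩ := exists_good_v m M p hppr hDp
  set B := MvPolynomial (Fin 2) A₀ with hB
  set J : Ideal B :=
    Ideal.span {mdPoly d a r, (X 0 : B) ^ (m + q), (X 1 : B) ^ (m + q)} with hJ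
  set W : B := uPoly q m v with hW
  -- the kill property
  have hkill : ∀ c : A₀, C c * W ∈ J → c ∈ p := by
    intro c hc
    obtain ⟨lam, hlam⟩ := hard_dir d a q m hqdef hd2 r v c hc
    exact hv c ⟨lam, hlam⟩
  -- D kills
  have hDu : C D * W ∈ J := by
    rw [hW, ← uPoly_smul]
    have hsm : D • v = M.mulVec (M.adjugate.mulVec v) := by
      rw [Matrix.mulVec_mulVec, Matrix.mul_adjugate, Matrix.smul_mulVec,
        Matrix.one_mulVec]
    rw [hsm]
    exact easy_dir d a q m hqdef hd2 r _
  -- clearing powers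
  obtain ⟨k, s₁, hs₁, hclear⟩ := exists_pow_clear p hppr D hp
  set K : Ideal B := Ideal.comap (constantCoeff : B →+* A₀) p with hK
  have hXYK : Ideal.span {(X 0 : B), X 1} ≤ K := by
    rw [Ideal.span_le]
    rintro x hx
    simp only [Set.mem_insert_iff, Set.mem_singleton_iff] at hx
    rcases hx with rfl | rfl <;>
      · simp only [SetLike.mem_coe, hK, Ideal.mem_comap, constantCoeff_X]
        exact p.zero_mem
  -- kill ideals
  let killIdeal : B → Ideal B := fun w => Submodule.comap (LinearMap.lsmul B B w) J
  have hkmem : ∀ w x : B, x ∈ killIdeal w ↔ w * x ∈ J := by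
    intro w x
    simp [killIdeal, Submodule.mem_comap, LinearMap.lsmul_apply, smul_eq_mul]
  -- existence of t
  have hT : ∃ t : ℕ, ∃ s : A₀, s ∉ p ∧ K ^ t ≤ killIdeal (C s * W) := by
    refine ⟨k + (n + n), s₁, hs₁, ?_⟩
    have hsplit : K ^ (k + (n + n)) ≤
        (p.map (C : A₀ →+* B)) ^ k ⊔ (Ideal.span {(X 0 : B), X 1}) ^ (n + n) := by
      rw [hK, comap_constantCoeff_eq p]
      exact sup_pow_le _ _ _ _
    have hxy : (Ideal.span {(X 0 : B), X 1}) ^ (n + n) ≤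
        Ideal.span {(X 0 : B) ^ n} ⊔ Ideal.span {(X 1 : B) ^ n} := by
      have h1 : Ideal.span {(X 0 : B), X 1} = Ideal.span {(X 0 : B)} ⊔ Ideal.span {(X 1 : B)} := by
        rw [Ideal.span_insert]
      rw [h1]
      have h2 := sup_pow_le (Ideal.span {(X 0 : B)}) (Ideal.span {(X 1 : B)}) n n
      rw [Ideal.span_singleton_pow, Ideal.span_singleton_pow] at h2
      exact h2
    refine hsplit.trans (sup_le ?_ (hxy.trans (sup_le ?_ ?_)))
    · rw [← Ideal.map_pow, Ideal.map_le_iff_le_comap]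
      intro c hc
      rw [Ideal.mem_comap, hkmem]
      obtain ⟨b, hb⟩ := Ideal.mem_span_singleton'.1 (hclear c hc)
      have hcb : (C (s₁ * c) : B) = C (b * D) := by rw [hb]
      have hcalc : (C s₁ * W) * C c = C b * (C D * W) := by
        calc (C s₁ * W) * C c = C (s₁ * c) * W := by rw [map_mul]; ring
          _ = C (b * D) * W := by rw [hcb]
          _ = C b * (C D * W) := by rw [map_mul]; ring
      rw [hcalc]
      exact Ideal.mul_mem_left _ _ hDu
    · rw [Ideal.span_le]
      rintro x hx
      simp only [Set.mem_singleton_iff] at hx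
      subst hx
      rw [SetLike.mem_coe, hkmem]
      apply Ideal.mul_mem_left
      rw [hn]
      exact Ideal.subset_span (by simp)
    · rw [Ideal.span_le]
      rintro x hx
      simp only [Set.mem_singleton_iff] at hx
      subst hx
      rw [SetLike.mem_coe, hkmem]
      apply Ideal.mul_mem_left
      rw [hn]
      exact Ideal.subset_span (by simp)
  haveI : DecidablePred (fun t : ℕ => ∃ s : A₀, s ∉ p ∧ K ^ t ≤ killIdeal (C s * W)) :=
    fun _ => Classical.propDecidable _
  set t₀ := Nat.find hT with ht₀def
  obtain ⟨s₂, hs₂p, hKt⟩ := Nat.find_spec hT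
  rw [← ht₀def] at hKt
  have ht₀pos : 0 < t₀ := by
    rcases Nat.eq_zero_or_pos t₀ with h0 | h
    · exfalso
      rw [h0, pow_zero, Ideal.one_eq_top] at hKt
      have h1 : (1 : B) ∈ killIdeal (C s₂ * W) := hKt trivial
      rw [hkmem, mul_one] at h1
      exact hs₂p (hkill s₂ h1)
    · exact h
  have hnot : ¬ ∃ s : A₀, s ∉ p ∧ K ^ (t₀ - 1) ≤ killIdeal (C s * W) :=
    Nat.find_min hT (by omega)
  haveI : IsNoetherianRing B := (inferInstance : IsNoetherianRing (MvPolynomial (Fin 2) A₀))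
  obtain ⟨Gs, hGs⟩ : (K ^ (t₀ - 1)).FG := IsNoetherian.noetherian _
  have hgex : ∃ g : B, g ∈ K ^ (t₀ - 1) ∧ ∀ s : A₀, s ∉ p → (C s * W) * g ∉ J := by
    by_contra hno
    push_neg at hno
    apply hnot
    have hno' : ∀ g : B, g ∈ K ^ (t₀ - 1) → ∃ s : A₀, s ∉ p ∧ (C s * W) * g ∈ J := by
      intro g hg
      obtain ⟨s, hs, hmem⟩ := hno g hg
      exact ⟨s, hs, hmem⟩
    choose! sf hsf1 hsf2 using hno'
    refine ⟨∏ g ∈ Gs, sf g, ?_, ?_⟩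
    · intro hmem
      rw [Ideal.IsPrime.prod_mem_iff] at hmem
      obtain ⟨g, hgG, hgp⟩ := hmem
      have hgK : g ∈ K ^ (t₀ - 1) := by
        rw [← hGs]; exact Ideal.subset_span hgG
      exact hsf1 g hgK hgp
    · rw [← hGs, Ideal.span_le]
      intro g hgG
      rw [SetLike.mem_coe, hkmem]
      have hgK : g ∈ K ^ (t₀ - 1) := by
        rw [← hGs]; exact Ideal.subset_span hgG
      have hcalc : (C (∏ g' ∈ Gs, sf g') * W) * g
          = C (∏ g' ∈ Gs.erase g, sf g') * ((C (sf g) * W) * g) := by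
        rw [← Finset.prod_erase_mul _ _ hgG, map_mul]
        ring
      rw [hcalc]
      exact Ideal.mul_mem_left _ _ (hsf2 g hgK)
  obtain ⟨gst, hgstK, hgst⟩ := hgex
  set wst : B := (C s₂ * W) * gst with hwstar
  -- quotient setup
  set fIdeal : Ideal B := Ideal.span {mdPoly d a r} with hfIdeal
  set mkA := Ideal.Quotient.mk fIdeal with hmkA
  set Isp : Ideal (B ⧸ fIdeal) := Ideal.span {mkA (X 0 ^ n), mkA (X 1 ^ n)} with hIsp
  have hkerK : RingHom.ker mkA ≤ K := by
    rw [hmkA, Ideal.mk_ker, hfIdeal, Ideal.span_le]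
    rintro x hx
    simp only [Set.mem_singleton_iff] at hx
    subst hx
    rw [SetLike.mem_coe, hK, Ideal.mem_comap]
    have hf0 : constantCoeff (mdPoly d a r) = 0 := constantCoeff_mdPoly d a hd_pos r
    rw [hf0]
    exact p.zero_mem
  -- membership translation
  have hcomap : Ideal.comap mkA (Ideal.map mkA (Ideal.span {(X 0 : B) ^ n, (X 1 : B) ^ n})) = J := by
    rw [Ideal.comap_map_of_surjective mkA Ideal.Quotient.mk_surjective]
    have hker : Ideal.comap mkA (⊥ : Ideal (B ⧸ fIdeal)) = fIdeal := by
      rw [← RingHom.ker_eq_comap_bot, hmkA, Ideal.mk_ker]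
    rw [hker, hfIdeal, hJ, hn, Ideal.span_insert]
    rw [sup_comm]
    rw [show Ideal.span {(X 0 : B) ^ (m + q)} ⊔ Ideal.span {(X 1 : B) ^ (m + q)}
        = Ideal.span {(X 0 : B) ^ (m + q), (X 1 : B) ^ (m + q)} from (Ideal.span_insert _ _).symm]
    exact (Ideal.span_insert _ _).symm
  have htrans : ∀ β : B, mkA β ∈ Isp ↔ β ∈ J := by
    intro β
    have hIm : Isp = Ideal.map mkA (Ideal.span {(X 0 : B) ^ n, (X 1 : B) ^ n}) := by
      rw [hIsp, Ideal.map_span, Set.image_insert_eq, Set.image_singleton]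
    rw [hIm]
    constructor
    · intro hmem
      have hcm : β ∈ Ideal.comap mkA (Ideal.map mkA (Ideal.span {(X 0 : B) ^ n, (X 1 : B) ^ n})) :=
        Ideal.mem_comap.2 hmem
      rwa [hcomap] at hcm
    · intro hmem
      have hcm : β ∈ Ideal.comap mkA (Ideal.map mkA (Ideal.span {(X 0 : B) ^ n, (X 1 : B) ^ n})) := by
        rw [hcomap]; exact hmem
      exact Ideal.mem_comap.1 hcm
  -- prime
  haveI hKprime : K.IsPrime := by
    rw [hK]
    exact Ideal.IsPrime.comap _
  haveI hbigPrime : (Ideal.map mkA K).IsPrime :=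
    Ideal.map_isPrime_of_surjective Ideal.Quotient.mk_surjective hkerK
  -- the witness
  set x : (B ⧸ fIdeal) ⧸ Isp := Ideal.Quotient.mk Isp (mkA wst) with hx
  have hsmul : ∀ g : B, (mkA g) • x = Ideal.Quotient.mk Isp (mkA (g * wst)) := by
    intro g
    rw [hx]
    rfl
  have hzero : ∀ g : B, (mkA g) • x = 0 ↔ g * wst ∈ J := by
    intro g
    rw [hsmul, Ideal.Quotient.eq_zero_iff_mem, htrans]
  rw [isAssociatedPrime_iff]
  constructor
  · exact hbigPrime
  refine ⟨x, ?_⟩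
  apply le_antisymm
  · -- bigP ≤ ann
    intro cA hcA
    obtain ⟨κ, hκK, rfl⟩ := Ideal.mem_map_iff_of_surjective mkA Ideal.Quotient.mk_surjective |>.1 hcA
    rw [Submodule.mem_colon_singleton, Submodule.mem_bot, hzero]
    have hcalc : κ * wst = (C s₂ * W) * (gst * κ) := by rw [hwstar]; ring
    rw [hcalc]
    apply hKt
    have ht0 : t₀ = (t₀ - 1) + 1 := by omega
    rw [ht0, pow_succ]
    exact Ideal.mul_mem_mul hgstK hκK
  · -- ann ≤ bigP
    intro cA hcA
    obtain ⟨g, rfl⟩ := Ideal.Quotient.mk_surjective cA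
    rw [Submodule.mem_colon_singleton, Submodule.mem_bot] at hcA
    rw [← hmkA] at hcA ⊢
    rw [hzero] at hcA
    set c₀ := constantCoeff g with hc₀
    have hhK : g - C c₀ ∈ K := hXYK (sub_C_mem g)
    have hhJ : (g - C c₀) * wst ∈ J := by
      have hmemK : (g - C c₀) * wst = (C s₂ * W) * (gst * (g - C c₀)) := by
        rw [hwstar]; ring
      rw [hmemK]
      apply hKt
      have ht0 : t₀ = (t₀ - 1) + 1 := by omega
      rw [ht0, pow_succ]
      exact Ideal.mul_mem_mul hgstK hhK
    have hc0J : C c₀ * wst ∈ J := by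
      have hcalc : C c₀ * wst = g * wst - (g - C c₀) * wst := by ring
      rw [hcalc]
      exact Ideal.sub_mem _ hcA hhJ
    have hc0p : c₀ ∈ p := by
      by_contra hc0p
      have hform : C c₀ * wst = (C (c₀ * s₂) * W) * gst := by
        rw [hwstar, map_mul]; ring
      rw [hform] at hc0J
      have hcs : c₀ * s₂ ∉ p := by
        intro hmem
        rcases hppr.mem_or_mem hmem with h | h
        · exact hc0p h
        · exact hs₂p h
      exact hgst (c₀ * s₂) hcs hc0J
    have hgK : g ∈ K := by
      have hdec : g = C c₀ + (g - C c₀) := by ring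
      rw [hdec]
      refine Ideal.add_mem _ ?_ hhK
      rw [hK, Ideal.mem_comap, constantCoeff_C]
      exact hc0p
    exact Ideal.mem_map_of_mem _ hgK

end Main

end StmtAux

/-- If the minimal primes of the determinants `det M_{n−a−d/2}` for `n ∈ S` form an infinite set,
then the associated primes of `A/(xⁿ,yⁿ)` for `n ∈ S` form an infinite set, where
`A = A₀[x,y]/((xy)^a (r₀ x^d + ⋯ + r_d y^d))`. -/
theorem stmt_4 {A₀ : Type} [CommRing A₀] [IsDomain A₀] [IsNoetherianRing A₀]
    (d : ℕ) (hd_even : Even d) (hd_pos : 0 < d) (r : ℕ → A₀) (a : ℕ) (S : Set ℕ)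
    (hS : (⋃ n ∈ S,
        (Ideal.span {(multidiag d r (n - a - d / 2)).det} : Ideal A₀).minimalPrimes).Infinite) :
    (⋃ n ∈ S,
      associatedPrimes (MvPolynomial (Fin 2) A₀ ⧸ Ideal.span {mdPoly d a r})
        ((MvPolynomial (Fin 2) A₀ ⧸ Ideal.span {mdPoly d a r}) ⧸
          Ideal.span {Ideal.Quotient.mk (Ideal.span {mdPoly d a r}) (X 0 ^ n),
            Ideal.Quotient.mk (Ideal.span {mdPoly d a r}) (X 1 ^ n)})).Infinite := by
  classical
  have hd2 : d / 2 + d / 2 = d := by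
    obtain ⟨c, hc⟩ := hd_even
    omega
  set mkA := Ideal.Quotient.mk (Ideal.span {mdPoly d a r}) with hmkA
  set T := (⋃ n ∈ S,
      (Ideal.span {(multidiag d r (n - a - d / 2)).det} : Ideal A₀).minimalPrimes) \ {⊥} with hT
  have hTinf : T.Infinite := hS.diff (Set.finite_singleton ⊥)
  set F : Ideal A₀ → Ideal (MvPolynomial (Fin 2) A₀ ⧸ Ideal.span {mdPoly d a r}) :=
    fun p => Ideal.map mkA (Ideal.comap (constantCoeff : MvPolynomial (Fin 2) A₀ →+* A₀) p)
    with hF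
  have hmem : ∀ p ∈ T, F p ∈ ⋃ n ∈ S,
      associatedPrimes (MvPolynomial (Fin 2) A₀ ⧸ Ideal.span {mdPoly d a r})
        ((MvPolynomial (Fin 2) A₀ ⧸ Ideal.span {mdPoly d a r}) ⧸
          Ideal.span {Ideal.Quotient.mk (Ideal.span {mdPoly d a r}) (X 0 ^ n),
            Ideal.Quotient.mk (Ideal.span {mdPoly d a r}) (X 1 ^ n)}) := by
    rintro p ⟨hpU, hpb⟩
    rw [Set.mem_iUnion₂] at hpU
    obtain ⟨n, hnS, hpmin⟩ := hpU
    rw [Set.mem_iUnion₂]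
    refine ⟨n, hnS, ?_⟩
    exact StmtAux.main_assoc d a hd_pos hd2 r n p hpmin (by simpa using hpb)
  have hprimeT : ∀ p ∈ T, p.IsPrime := by
    rintro p ⟨hpU, -⟩
    rw [Set.mem_iUnion₂] at hpU
    obtain ⟨n, -, hpmin⟩ := hpU
    exact hpmin.1.1
  have hrec : ∀ p ∈ T, Ideal.comap (C : A₀ →+* MvPolynomial (Fin 2) A₀)
      (Ideal.comap mkA (F p)) = p := by
    intro p hp
    have h1 : Ideal.comap mkA (F p) =
        Ideal.comap (constantCoeff : MvPolynomial (Fin 2) A₀ →+* A₀) p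
          ⊔ Ideal.comap mkA ⊥ := by
      rw [hF]
      exact Ideal.comap_map_of_surjective mkA Ideal.Quotient.mk_surjective _
    have hker : Ideal.comap mkA (⊥ : Ideal (MvPolynomial (Fin 2) A₀ ⧸ Ideal.span {mdPoly d a r}))
        = Ideal.span {mdPoly d a r} := by
      rw [← RingHom.ker_eq_comap_bot, hmkA, Ideal.mk_ker]
    have hle : Ideal.span {mdPoly d a r} ≤
        Ideal.comap (constantCoeff : MvPolynomial (Fin 2) A₀ →+* A₀) p := by
      rw [Ideal.span_le]
      rintro x hx
      simp only [Set.mem_singleton_iff] at hx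
      subst hx
      rw [SetLike.mem_coe, Ideal.mem_comap, StmtAux.constantCoeff_mdPoly d a hd_pos r]
      exact p.zero_mem
    rw [h1, hker, sup_eq_left.2 hle]
    ext c
    rw [Ideal.mem_comap, Ideal.mem_comap, constantCoeff_C]
  have hinj : Set.InjOn F T := by
    intro p1 hp1 p2 hp2 hFeq
    rw [← hrec p1 hp1, ← hrec p2 hp2, hFeq]
  have himg : (F '' T).Infinite := hTinf.image hinj
  refine himg.mono ?_
  rintro x ⟨p, hpT, rfl⟩
  exact hmem p hpT
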